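/- Assume 0 < ε < 1/2 satisfies (1/2)·(1 − 2ε)^{−2}·(1 + 2ε) ≤ 1, that 0 < p ≤ 1 satisfies p^{k−1} B^k ≤ ε·8^{−k} for all k ≥ 2, and that |J_k| ≤ B^k for all k ≥ 2. If α* ∈ S is a fixed point of f (i.e. f(α*) = α*), then |α*_k| ≤ p ε · 4^{−k} for every k ≥ 2, and ‖α*‖ ≤ p ε / 2. -/

import Mathlib

open scoped ENNReal

/-- The norm `‖α‖ = Σ_{k≥2} 2^k |α_k|`, valued in `[0,∞]` so that it is always defined;
membership in the space `S` below forces it to be finite. -/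
noncomputable def seqNorm (α : ℕ → ℝ) : ℝ≥0∞ :=
  ∑' k : ℕ, if 2 ≤ k then (2 : ℝ≥0∞) ^ k * ENNReal.ofReal |α k| else 0

/-- `A(α) = Σ_{k≥2} k α_k`. -/
noncomputable def seqA (α : ℕ → ℝ) : ℝ :=
  ∑' k : ℕ, if 2 ≤ k then (k : ℝ) * α k else 0

/-- The map `f(α)_k = J_k p^k (1 - 2A(α))^{-2k} (1 - 2A(α)/p)^k` for `k ≥ 2`
(entries of index `< 2` are irrelevant and set to `0`). -/
noncomputable def fMap (p : ℝ) (J : ℕ → ℝ) (α : ℕ → ℝ) : ℕ → ℝ := fun k =>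
  if 2 ≤ k then J k * p ^ k * ((1 - 2 * seqA α)⁻¹) ^ (2 * k) * (1 - 2 * seqA α / p) ^ k
  else 0

/-- The set `S = {α : ‖α‖ ≤ p ε}`. -/
def Sset (p ε : ℝ) : Set (ℕ → ℝ) := {α | seqNorm α ≤ ENNReal.ofReal (p * ε)}

lemma seqNorm_eq (α : ℕ → ℝ) :
    seqNorm α = ∑' k : ℕ, ENNReal.ofReal (if 2 ≤ k then (2:ℝ)^k * |α k| else 0) := by
  unfold seqNorm
  congr 1; funext k
  split
  · rw [ENNReal.ofReal_mul (by positivity), ENNReal.ofReal_pow (by norm_num)]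
    norm_num
  · simp

lemma hsum_aux (c : ℝ) : Summable fun k : ℕ => if 2 ≤ k then c*(2:ℝ)⁻¹^k else 0 := by
  apply Summable.of_norm
  have hg : Summable fun k : ℕ => |c| * (2:ℝ)⁻¹^k :=
    (summable_geometric_of_lt_one (by norm_num) (by norm_num)).mul_left _
  refine Summable.of_nonneg_of_le (fun k => norm_nonneg _) (fun k => ?_) hg
  rw [Real.norm_eq_abs]
  split
  · rw [abs_mul, abs_pow, abs_inv, abs_two]
  · simp

lemma tsum_aux (c : ℝ) :
    (∑' k : ℕ, if 2 ≤ k then c*(2:ℝ)⁻¹^k else 0) = c / 2 := by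
  have h := hsum_aux c
  have h3 := Summable.sum_add_tsum_nat_add (f := fun k : ℕ => if 2 ≤ k then c*(2:ℝ)⁻¹^k else 0) 2 h
  rw [← h3]
  simp only [Nat.le_add_left 2, if_true]
  have h4 : (∑' k : ℕ, c*(2:ℝ)⁻¹^(k+2)) = (c * (2:ℝ)⁻¹^2) * (1 - 2⁻¹)⁻¹ := by
    rw [← tsum_geometric_of_lt_one (by norm_num : (0:ℝ) ≤ 2⁻¹) (by norm_num), ← tsum_mul_left]
    congr 1; funext k; ring
  rw [h4]
  simp [Finset.sum_range_succ]
  ring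

theorem stmt3 (p ε B : ℝ) (J : ℕ → ℝ)
    (hε0 : 0 < ε) (hε : ε < 1 / 2)
    (hcond : (1 / 2) * ((1 - 2 * ε)⁻¹) ^ 2 * (1 + 2 * ε) ≤ 1)
    (hp0 : 0 < p) (hp1 : p ≤ 1) (hB : 0 < B)
    (hpB : ∀ k : ℕ, 2 ≤ k → p ^ (k - 1) * B ^ k ≤ ε * (8 : ℝ)⁻¹ ^ k)
    (hJ : ∀ k : ℕ, 2 ≤ k → |J k| ≤ B ^ k)
    (αstar : ℕ → ℝ) (hmem : αstar ∈ Sset p ε) (hfix : fMap p J αstar = αstar) :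
    (∀ k : ℕ, 2 ≤ k → |αstar k| ≤ p * ε * (4 : ℝ)⁻¹ ^ k) ∧
    seqNorm αstar ≤ ENNReal.ofReal (p * ε / 2) := by
  simp only [Sset, Set.mem_setOf_eq] at hmem
  set A := seqA αstar with hA_def
  set g : ℕ → ℝ := fun k => if 2 ≤ k then (2:ℝ)^k * |αstar k| else 0 with hg_def
  have hg0 : ∀ k, 0 ≤ g k := by
    intro k; simp only [hg_def]; split
    · positivity
    · exact le_refl 0
  have hne : seqNorm αstar ≠ ⊤ := ne_top_of_le_ne_top ENNReal.ofReal_ne_top hmem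
  rw [seqNorm_eq] at hne hmem
  have hgsum : Summable g := by
    have h1 := ENNReal.summable_toReal hne
    exact h1.congr fun k => ENNReal.toReal_ofReal (hg0 k)
  have hgle : (∑' k, g k) ≤ p * ε := by
    have h2 : ENNReal.ofReal (∑' k, g k) ≤ ENNReal.ofReal (p*ε) := by
      rw [ENNReal.ofReal_tsum_of_nonneg hg0 hgsum]
      exact hmem
    exact (ENNReal.ofReal_le_ofReal_iff (by positivity)).mp h2
  -- bound on A
  have habs : ∀ k : ℕ, |if 2 ≤ k then (k:ℝ) * αstar k else 0| ≤ g k := by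
    intro k
    simp only [hg_def]
    split
    · rename_i hk
      rw [abs_mul, Nat.abs_cast]
      have hk2 : (k:ℝ) ≤ (2:ℝ)^k := by
        exact_mod_cast (Nat.lt_two_pow_self (n := k)).le
      exact mul_le_mul_of_nonneg_right hk2 (abs_nonneg _)
    · simp
  have hfabs : Summable fun k : ℕ => |if 2 ≤ k then (k:ℝ) * αstar k else 0| :=
    Summable.of_nonneg_of_le (fun k => abs_nonneg _) habs hgsum
  have hAle : |A| ≤ p * ε := by
    have h3 : |A| ≤ ∑' k : ℕ, |if 2 ≤ k then (k:ℝ) * αstar k else 0| := by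
      rw [hA_def]
      unfold seqA
      simpa using norm_tsum_le_tsum_norm (f := fun k : ℕ => if 2 ≤ k then (k:ℝ) * αstar k else 0)
        (by simpa using hfabs)
    exact h3.trans ((Summable.tsum_le_tsum habs hfabs hgsum).trans hgle)
  have hAε : |A| ≤ ε := hAle.trans (by nlinarith)
  have h1mε : (0:ℝ) < 1 - 2*ε := by linarith
  have h1mA : 1 - 2*ε ≤ 1 - 2*A := by
    have := (abs_le.mp hAε).2; linarith
  have h1mApos : (0:ℝ) < 1 - 2*A := lt_of_lt_of_le h1mε h1mA
  have hinv0 : (0:ℝ) ≤ (1 - 2*A)⁻¹ := by positivity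
  have hinv : (1 - 2*A)⁻¹ ≤ (1 - 2*ε)⁻¹ := by
    apply inv_anti₀ h1mε h1mA
  have hquot : |1 - 2*A/p| ≤ 1 + 2*ε := by
    have hx : |2*A/p| ≤ 2*ε := by
      rw [abs_div, abs_of_pos hp0, abs_mul, abs_two, div_le_iff₀ hp0]
      nlinarith
    have := abs_le.mp hx
    rw [abs_le]
    constructor <;> linarith [this.1, this.2]
  have hbase : (((1 - 2*ε)⁻¹)^2 * (1 + 2*ε)) ≤ 2 := by nlinarith
  have hbase0 : (0:ℝ) ≤ ((1 - 2*ε)⁻¹)^2 * (1 + 2*ε) := by positivity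
  have key : ∀ k : ℕ, 2 ≤ k → |αstar k| ≤ p * ε * (4:ℝ)⁻¹^k := by
    intro k hk
    have heq : αstar k = J k * p^k * ((1 - 2*A)⁻¹)^(2*k) * (1 - 2*A/p)^k := by
      conv_lhs => rw [← hfix]
      simp only [fMap, ← hA_def, if_pos hk]
    have h1 : |αstar k| = |J k| * p^k * ((1 - 2*A)⁻¹)^(2*k) * |1 - 2*A/p|^k := by
      rw [heq, abs_mul, abs_mul, abs_mul, abs_pow, abs_pow, abs_pow, abs_of_pos hp0,
        abs_of_nonneg hinv0]
    have h2 : |αstar k| ≤ B^k * p^k * ((1 - 2*ε)⁻¹)^(2*k) * (1 + 2*ε)^k := by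
      rw [h1]
      gcongr ?_ * ?_ * ?_ * ?_
      · exact hJ k hk
      · exact pow_le_pow_left₀ hinv0 hinv _
      · exact pow_le_pow_left₀ (abs_nonneg _) hquot _
    have hpk : p ^ k = p * p^(k-1) := by
      conv_lhs => rw [show k = (k-1)+1 from by omega]
      rw [pow_succ']
    have h3 : B^k * p^k * ((1 - 2*ε)⁻¹)^(2*k) * (1 + 2*ε)^k
        = (p^(k-1) * B^k) * p * ((((1 - 2*ε)⁻¹)^2 * (1 + 2*ε))^k) := by
      rw [pow_mul, mul_pow, hpk]; ring
    have h4 : (p^(k-1) * B^k) * p * ((((1 - 2*ε)⁻¹)^2 * (1 + 2*ε))^k)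
        ≤ (ε * (8:ℝ)⁻¹^k) * p * ((2:ℝ)^k) := by
      gcongr ?_ * _ * ?_
      · exact hpB k hk
      · exact pow_le_pow_left₀ hbase0 hbase _
    have h5 : (ε * (8:ℝ)⁻¹^k) * p * ((2:ℝ)^k) = p * ε * (4:ℝ)⁻¹^k := by
      rw [show ((4:ℝ)⁻¹) = 8⁻¹*2 by norm_num, mul_pow]; ring
    calc |αstar k| ≤ B^k * p^k * ((1 - 2*ε)⁻¹)^(2*k) * (1 + 2*ε)^k := h2
      _ = (p^(k-1) * B^k) * p * ((((1 - 2*ε)⁻¹)^2 * (1 + 2*ε))^k) := h3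
      _ ≤ (ε * (8:ℝ)⁻¹^k) * p * ((2:ℝ)^k) := h4
      _ = p * ε * (4:ℝ)⁻¹^k := h5
  refine ⟨key, ?_⟩
  rw [seqNorm_eq]
  have hhle : ∀ k : ℕ, ENNReal.ofReal (if 2 ≤ k then (2:ℝ)^k * |αstar k| else 0)
      ≤ ENNReal.ofReal (if 2 ≤ k then p*ε*(2:ℝ)⁻¹^k else 0) := by
    intro k
    apply ENNReal.ofReal_le_ofReal
    split
    · rename_i hk
      calc (2:ℝ)^k * |αstar k| ≤ (2:ℝ)^k * (p*ε*(4:ℝ)⁻¹^k) := by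
            exact mul_le_mul_of_nonneg_left (key k hk) (by positivity)
        _ = p*ε*(2:ℝ)⁻¹^k := by
            rw [show ((2:ℝ)⁻¹) = 2*4⁻¹ by norm_num, mul_pow]; ring
    · exact le_refl 0
  have hh0 : ∀ k : ℕ, 0 ≤ (if 2 ≤ k then p*ε*(2:ℝ)⁻¹^k else 0) := by
    intro k; split
    · positivity
    · exact le_refl 0
  calc (∑' k : ℕ, ENNReal.ofReal (if 2 ≤ k then (2:ℝ)^k * |αstar k| else 0))
      ≤ ∑' k : ℕ, ENNReal.ofReal (if 2 ≤ k then p*ε*(2:ℝ)⁻¹^k else 0) :=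
        ENNReal.tsum_le_tsum hhle
    _ = ENNReal.ofReal (∑' k : ℕ, if 2 ≤ k then p*ε*(2:ℝ)⁻¹^k else 0) :=
        (ENNReal.ofReal_tsum_of_nonneg hh0 (hsum_aux _)).symm
    _ = ENNReal.ofReal (p * ε / 2) := by rw [tsum_aux]
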